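/- arXiv:2410.10069 — 2 statements merged into one kernel-verified Lean document; each statement's English description precedes it below -/
import Mathlib

section
/- Define, for N >= 2, the set D'_N of binary sequences (alpha_i) with alpha_1...alpha_{2N} = 1^{2N-1}0 and 0^N < alpha_{kN+1}...alpha_{(k+1)N} < 1^N lexicographically for all k >= 2, and the set bar-D'_N of binary sequences (mu_i) with mu_1...mu_{2N} = 0^{2N-1}1 and 0^N < mu_{kN+1}...mu_{(k+1)N} < 1^N for all k >= 2. Then for every (mu, alpha) in bar-D'_N x D'_N and all positive integers m, n: mu < sigma^m(mu) < alpha and mu < sigma^n(alpha) < alpha lexicographically. -/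
/-- The one-sided left shift on binary sequences. -/
def shift (x : ℕ → Bool) : ℕ → Bool := fun n => x (n + 1)

/-- Strict lexicographic order on binary sequences (`false < true`). -/
def lexLt (x y : ℕ → Bool) : Prop :=
  ∃ k : ℕ, (∀ i < k, x i = y i) ∧ x k < y k

/-- Non-strict lexicographic order on binary sequences. -/
def lexLe (x y : ℕ → Bool) : Prop := lexLt x y ∨ x = y

/-- The set `D'_N`: sequences beginning with `1^{2N-1}0` whose subsequent blocks of
length `N` are lexicographically strictly between `0^N` and `1^N`. -/
def DN (N : ℕ) : Set (ℕ → Bool) :=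
  {a | (∀ i < 2 * N - 1, a i = true) ∧ a (2 * N - 1) = false ∧
    ∀ k, 2 ≤ k → (∃ i < N, a (k * N + i) = true) ∧ (∃ i < N, a (k * N + i) = false)}

/-- The set `\bar{D}'_N`: sequences beginning with `0^{2N-1}1` whose subsequent blocks
of length `N` are lexicographically strictly between `0^N` and `1^N`. -/
def DNbar (N : ℕ) : Set (ℕ → Bool) :=
  {a | (∀ i < 2 * N - 1, a i = false) ∧ a (2 * N - 1) = true ∧
    ∀ k, 2 ≤ k → (∃ i < N, a (k * N + i) = true) ∧ (∃ i < N, a (k * N + i) = false)}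



lemma shift_iter (x : ℕ → Bool) (m n : ℕ) : (shift^[m] x) n = x (n + m) := by
  induction m generalizing x with
  | zero => rfl
  | succ m ih =>
      rw [Function.iterate_succ_apply, ih]
      rfl

lemma exists_block (N : ℕ) (hN : 2 ≤ N) (a : ℕ → Bool) (b : Bool)
    (ha : ∀ k, 2 ≤ k → ∃ i < N, a (k * N + i) = b)
    (m : ℕ) (hm : 2 * N - 1 ≤ m) : ∃ j < 2 * N - 1, a (m + j) = b := by
  set k := (m + N - 1) / N with hk
  have hNd : k * N + (m + N - 1) % N = m + N - 1 := by
    rw [mul_comm]; exact Nat.div_add_mod _ _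
  have hmod := Nat.mod_lt (m + N - 1) (show 0 < N by omega)
  have h1 : m ≤ k * N := by omega
  have h2 : k * N ≤ m + N - 1 := by omega
  have hk2 : 2 ≤ k := by
    by_contra h
    have : k * N ≤ 1 * N := Nat.mul_le_mul_right N (by omega)
    omega
  obtain ⟨i, hi, hb⟩ := ha k hk2
  refine ⟨k * N + i - m, by omega, ?_⟩
  rw [show m + (k * N + i - m) = k * N + i by omega]
  exact hb

lemma lexLt_of_prefix_false (c : ℕ) (x y : ℕ → Bool)
    (hx : ∀ i < c, x i = false) (hy : ∃ j < c, y j = true) : lexLt x y := by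
  classical
  obtain ⟨j, hjc, hjt⟩ := hy
  have h : ∃ j, y j = true := ⟨j, hjt⟩
  have hj0 : Nat.find h ≤ j := Nat.find_min' h hjt
  refine ⟨Nat.find h, fun i hi => ?_, ?_⟩
  · have hyi : y i = false := by
      have := Nat.find_min h hi; simpa using this
    rw [hx i (by omega), hyi]
  · rw [hx _ (by omega), Nat.find_spec h]
    exact Bool.false_lt_true

lemma lexLt_of_prefix_true (c : ℕ) (x y : ℕ → Bool)
    (hx : ∀ i < c, x i = true) (hy : ∃ j < c, y j = false) : lexLt y x := by
  classical
  obtain ⟨j, hjc, hjt⟩ := hy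
  have h : ∃ j, y j = false := ⟨j, hjt⟩
  have hj0 : Nat.find h ≤ j := Nat.find_min' h hjt
  refine ⟨Nat.find h, fun i hi => ?_, ?_⟩
  · have hyi : y i = true := by
      have := Nat.find_min h hi; simpa using this
    rw [hx i (by omega), hyi]
  · rw [hx _ (by omega), Nat.find_spec h]
    exact Bool.false_lt_true

/-- Every pair `(mu, alpha) ∈ \bar{D}'_N × D'_N` lies in `U'_2`. -/
theorem stmt12 (N : ℕ) (hN : 2 ≤ N) (mu alpha : ℕ → Bool)
    (hmu : mu ∈ DNbar N) (hal : alpha ∈ DN N) :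
    ∀ m n : ℕ, 1 ≤ m → 1 ≤ n →
      lexLt mu (shift^[m] mu) ∧ lexLt (shift^[m] mu) alpha ∧
      lexLt mu (shift^[n] alpha) ∧ lexLt (shift^[n] alpha) alpha := by
  obtain ⟨hmu1, hmu2, hmu3⟩ := hmu
  obtain ⟨hal1, hal2, hal3⟩ := hal
  intro m n hm hn
  refine ⟨?_, ?_, ?_, ?_⟩
  · -- mu < shift^m mu
    refine lexLt_of_prefix_false (2 * N - 1) _ _ hmu1 ?_
    rcases le_or_gt m (2 * N - 1) with h | h
    · exact ⟨2 * N - 1 - m, by omega, by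
        rw [shift_iter, show 2 * N - 1 - m + m = 2 * N - 1 by omega]; exact hmu2⟩
    · obtain ⟨j, hj, hb⟩ := exists_block N hN mu true
        (fun k hk => (hmu3 k hk).1) m (by omega)
      exact ⟨j, hj, by rw [shift_iter, Nat.add_comm]; exact hb⟩
  · -- shift^m mu < alpha
    refine lexLt_of_prefix_true (2 * N - 1) _ _ hal1 ?_
    rcases lt_or_ge m (2 * N - 1) with h | h
    · exact ⟨0, by omega, by rw [shift_iter, Nat.zero_add]; exact hmu1 m h⟩
    · obtain ⟨j, hj, hb⟩ := exists_block N hN mu false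
        (fun k hk => (hmu3 k hk).2) m h
      exact ⟨j, hj, by rw [shift_iter, Nat.add_comm]; exact hb⟩
  · -- mu < shift^n alpha
    refine lexLt_of_prefix_false (2 * N - 1) _ _ hmu1 ?_
    rcases lt_or_ge n (2 * N - 1) with h | h
    · exact ⟨0, by omega, by rw [shift_iter, Nat.zero_add]; exact hal1 n h⟩
    · obtain ⟨j, hj, hb⟩ := exists_block N hN alpha true
        (fun k hk => (hal3 k hk).1) n h
      exact ⟨j, hj, by rw [shift_iter, Nat.add_comm]; exact hb⟩
  · -- shift^n alpha < alpha
    refine lexLt_of_prefix_true (2 * N - 1) _ _ hal1 ?_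
    rcases le_or_gt n (2 * N - 1) with h | h
    · exact ⟨2 * N - 1 - n, by omega, by
        rw [shift_iter, show 2 * N - 1 - n + n = 2 * N - 1 by omega]; exact hal2⟩
    · obtain ⟨j, hj, hb⟩ := exists_block N hN alpha false
        (fun k hk => (hal3 k hk).2) n (by omega)
      exact ⟨j, hj, by rw [shift_iter, Nat.add_comm]; exact hb⟩
end

section
/- Let (mu, alpha) be in V'_2 with alpha = (alpha_1...alpha_n)^infty periodic, and suppose mu < sigma^j(alpha) <= alpha and mu < sigma^i(mu) < alpha for all i, j >= 1. Define S := sup{sigma^j(mu) : j >= 1} (lexicographic supremum, attained as a sequence) and alpha^l := (alpha_1...alpha_n)^l S for each l >= 1. Then sigma^j(mu) < alpha_1...alpha_n sigma^j(mu) lexicographically for all j >= 0. -/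
/-- The symbolic set `V'_2`. -/
def V2' : Set ((ℕ → Bool) × (ℕ → Bool)) :=
  {p | p.1 0 = false ∧ p.2 0 = true ∧
    (∀ m : ℕ, lexLe p.1 (shift^[m] p.1) ∧ lexLe (shift^[m] p.1) p.2) ∧
    (∀ n : ℕ, lexLe p.1 (shift^[n] p.2) ∧ lexLe (shift^[n] p.2) p.2)}

lemma lexLt_trans' {x y z : ℕ → Bool} (h1 : lexLt x y) (h2 : lexLt y z) : lexLt x z := by
  obtain ⟨k1, a1, b1⟩ := h1
  obtain ⟨k2, a2, b2⟩ := h2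
  rcases lt_trichotomy k1 k2 with h | h | h
  · exact ⟨k1, fun i hi => (a1 i hi).trans (a2 i (hi.trans h)),
      by rw [← a2 k1 h]; exact b1⟩
  · subst h
    exact ⟨k1, fun i hi => (a1 i hi).trans (a2 i hi), b1.trans b2⟩
  · exact ⟨k2, fun i hi => (a1 i (hi.trans h)).trans (a2 i hi),
      by rw [a1 k2 h]; exact b2⟩

lemma lexLt_of_lexLt_of_lexLe' {x y z : ℕ → Bool} (h1 : lexLt x y) (h2 : lexLe y z) :
    lexLt x z := by
  rcases h2 with h2 | rfl
  · exact lexLt_trans' h1 h2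
  · exact h1

lemma lexLt_irrefl' {x : ℕ → Bool} (h : lexLt x x) : False := by
  obtain ⟨k, _, hk⟩ := h
  exact lt_irrefl _ hk

lemma lexLe_of_not_lexLt {x y : ℕ → Bool} (h : ¬ lexLt x y) : lexLe y x := by
  by_cases he : y = x
  · exact Or.inr he
  · have hne : ∃ k, y k ≠ x k := by
      by_contra h'
      push_neg at h'
      exact he (funext h')
    left
    refine ⟨Nat.find hne, fun i hi => by
      have := Nat.find_min hne hi; simpa using this, ?_⟩
    have hk : y (Nat.find hne) ≠ x (Nat.find hne) := Nat.find_spec hne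
    rcases lt_or_gt_of_ne hk with h' | h'
    · exact h'
    · exfalso
      exact h ⟨Nat.find hne, fun i hi => by
        have := Nat.find_min hne hi; simp at this; exact this.symm, h'⟩

/-- Prepend the first `n` letters of `alpha` to a sequence. -/
def prep (alpha : ℕ → Bool) (n : ℕ) (u : ℕ → Bool) : ℕ → Bool :=
  fun i => if i < n then alpha i else u (i - n)

lemma prep_mono (alpha : ℕ → Bool) (n : ℕ) {u v : ℕ → Bool} (h : lexLe u v) :
    lexLe (prep alpha n u) (prep alpha n v) := by
  rcases h with ⟨k, hk, hlt⟩ | rfl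
  · left
    refine ⟨k + n, ?_, ?_⟩
    · intro i hi
      unfold prep
      by_cases h' : i < n
      · simp [h']
      · simp only [h', if_false]
        exact hk _ (by omega)
    · simp only [prep, show ¬ (k + n < n) by omega, if_false, Nat.add_sub_cancel]
      exact hlt
  · exact Or.inr rfl

lemma prep_agree (alpha : ℕ → Bool) (n : ℕ) (hper : ∀ k, alpha (k + n) = alpha k)
    (x : ℕ → Bool) : ∀ m i, i < m * n → (prep alpha n)^[m] x i = alpha i := by
  intro m
  induction m with
  | zero => intro i hi; omega
  | succ m ih =>
    intro i hi
    rw [Function.iterate_succ_apply']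
    show (if i < n then alpha i else (prep alpha n)^[m] x (i - n)) = alpha i
    by_cases h' : i < n
    · simp [h']
    · simp only [h', if_false]
      rw [ih (i - n) (by rw [Nat.succ_mul] at hi; omega)]
      have := hper (i - n)
      rw [show i - n + n = i by omega] at this
      exact this.symm

/-- Key claim in Case (iii) of Lemma `l:U'`: if `alpha` is periodic with period `n`
and `(mu, alpha) ∈ V'_2` with `mu ≺ σ^j(alpha) ≼ alpha` and `mu ≺ σ^i(mu) ≺ alpha`
for all `i, j ≥ 1`, then `σ^j(mu) ≺ alpha_1…alpha_n σ^j(mu)` for all `j ≥ 0`. -/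
theorem stmt14 (mu alpha : ℕ → Bool)
    (n : ℕ) (hn : 0 < n) (hper : ∀ k, alpha (k + n) = alpha k)
    (hV : (mu, alpha) ∈ V2')
    (hj : ∀ j, 1 ≤ j → lexLt mu (shift^[j] alpha) ∧ lexLe (shift^[j] alpha) alpha)
    (hi : ∀ i, 1 ≤ i → lexLt mu (shift^[i] mu) ∧ lexLt (shift^[i] mu) alpha) :
    ∀ j : ℕ, lexLt (shift^[j] mu)
      (fun i => if i < n then alpha i else shift^[j] mu (i - n)) := by
  intro j
  set x := shift^[j] mu with hx
  have hxα : lexLt x alpha := by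
    rcases Nat.eq_zero_or_pos j with rfl | hj1
    · refine ⟨0, fun i hi => absurd hi (Nat.not_lt_zero i), ?_⟩
      have h1 : x 0 = false := hV.1
      have h2 : alpha 0 = true := hV.2.1
      rw [h1, h2]
      exact Bool.false_lt_true
    · exact (hi j hj1).2
  show lexLt x (prep alpha n x)
  by_contra hcon
  have hwx : lexLe (prep alpha n x) x := lexLe_of_not_lexLt hcon
  have hiter : ∀ m, lexLe ((prep alpha n)^[m] x) x := by
    intro m
    induction m with
    | zero => exact Or.inr rfl
    | succ m ih =>
      rw [Function.iterate_succ_apply']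
      rcases prep_mono alpha n ih with h | h
      · exact Or.inl (lexLt_of_lexLt_of_lexLe' h hwx)
      · rw [h]; exact hwx
  obtain ⟨k, hk, hklt⟩ := hxα
  have hkn : ∀ i, i ≤ k → i < (k + 1) * n := by
    intro i hik
    have : (k + 1) * 1 ≤ (k + 1) * n := Nat.mul_le_mul_left _ hn
    omega
  have hlt2 : lexLt x ((prep alpha n)^[k + 1] x) := by
    refine ⟨k, fun i hi => ?_, ?_⟩
    · rw [prep_agree alpha n hper x (k + 1) i (hkn i hi.le)]
      exact hk i hi
    · rw [prep_agree alpha n hper x (k + 1) k (hkn k le_rfl)]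
      exact hklt
  exact lexLt_irrefl' (lexLt_of_lexLt_of_lexLe' hlt2 (hiter (k + 1)))
end
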